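/- arXiv:1809.09542 — 2 statements merged into one kernel-verified Lean document; each statement's English description precedes it below -/
import Mathlib

section
/- There is no decomposition of (n,s) = (6,7) as (n₁+n₂, s₁+s₂) with nonnegative integers satisfying nᵢ + 2sᵢ ≡ 0 (mod 10) with nᵢ + 2sᵢ > 0 and sᵢ ≤ 2nᵢ − 5 for i = 1,2. -/
theorem stmt_17 :
    ¬ ∃ n₁ s₁ n₂ s₂ : ℤ, 0 ≤ n₁ ∧ 0 ≤ s₁ ∧ 0 ≤ n₂ ∧ 0 ≤ s₂ ∧
      n₁ + n₂ = 6 ∧ s₁ + s₂ = 7 ∧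
      (10 : ℤ) ∣ n₁ + 2 * s₁ ∧ (10 : ℤ) ∣ n₂ + 2 * s₂ ∧
      0 < n₁ + 2 * s₁ ∧ 0 < n₂ + 2 * s₂ ∧
      s₁ ≤ 2 * n₁ - 5 ∧ s₂ ≤ 2 * n₂ - 5 := by
  rintro ⟨n₁, s₁, n₂, s₂, h1, h2, h3, h4, h5, h6, ⟨a, ha⟩, ⟨b, hb⟩, h9, h10, h11, h12⟩
  omega
end

section
/- There is no decomposition of (n,s) = (8,11) as (n₁+n₂, s₁+s₂) with nonnegative integers satisfying nᵢ + 2sᵢ ≡ 0 (mod 10) with nᵢ + 2sᵢ > 0 and sᵢ ≤ 2nᵢ − 5 for i = 1,2. -/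
theorem stmt_18 :
    ¬ ∃ n₁ s₁ n₂ s₂ : ℤ, 0 ≤ n₁ ∧ 0 ≤ s₁ ∧ 0 ≤ n₂ ∧ 0 ≤ s₂ ∧
      n₁ + n₂ = 8 ∧ s₁ + s₂ = 11 ∧
      (10 : ℤ) ∣ n₁ + 2 * s₁ ∧ (10 : ℤ) ∣ n₂ + 2 * s₂ ∧
      0 < n₁ + 2 * s₁ ∧ 0 < n₂ + 2 * s₂ ∧
      s₁ ≤ 2 * n₁ - 5 ∧ s₂ ≤ 2 * n₂ - 5 := by
  rintro ⟨n₁, s₁, n₂, s₂, h1, h2, h3, h4, h5, h6, ⟨a, ha⟩, ⟨b, hb⟩, h9, h10, h11, h12⟩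
  omega
end
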